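/- The regularized maximizer has coherence at least that of the ground truth: assume σ has full support. Fix any prior policy φ ∈ M, any N ≥ 1, any fixed training contexts ŝ₁,…,ŝ_N in S, and any constant c ∈ ℝ such that −2χ_φ(π) + c ≥ 0 for all d-policies π. If π̂ maximizes over all d-policies the objective α_train(π;π*) − √((−2χ_φ(π) + c)/(2N)), then χ_φ(π̂) ≥ χ_φ(π*). -/

import Mathlib

open Finset

/-- A learning system: a commutative additive monoid `M` of stochastic policies,
a finite nonempty set `S` of contexts, a finite nonempty behavior set `A s` for each
context `s`, and an inference function `inf` assigning to each policy and context a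
probability mass function on the behaviors of that context, satisfying the chain rule. -/
structure LearningSystem (M : Type) [AddCommMonoid M] (S : Type) [Fintype S] [DecidableEq S] :
    Type where
  A : S → Finset M
  A_nonempty : ∀ s, (A s).Nonempty
  inf : M → S → M → ℝ
  inf_nonneg : ∀ φ s a, 0 ≤ inf φ s a
  inf_eq_zero_of_not_mem : ∀ φ s a, a ∉ A s → inf φ s a = 0
  inf_sum_one : ∀ φ s, ∑ a ∈ A s, inf φ s a = 1
  chain_rule : ∀ (φ : M) (s₁ s₂ : S) (a₁ a₂ : M), a₁ ∈ A s₁ → a₂ ∈ A s₂ →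
    inf φ s₁ a₁ * inf (φ + a₁) s₂ a₂ = inf φ s₂ a₂ * inf (φ + a₂) s₁ a₁

namespace LearningSystem

variable {M S : Type} [AddCommMonoid M] [Fintype S] [DecidableEq S]

/-- A deterministic policy (d-policy): an assignment of a behavior `π s ∈ A s` to
every context `s ∈ S`. -/
abbrev DPolicy (L : LearningSystem M S) : Type := ∀ s : S, {a : M // a ∈ L.A s}

/-- `σ` has full support: every behavior of every context has positive probability
under every prior policy. -/
def FullSupport (L : LearningSystem M S) : Prop :=
  ∀ (φ : M) (s : S) (a : M), a ∈ L.A s → 0 < L.inf φ s a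

/-- The coherence of a d-policy `π` relative to the prior policy `φ`, computed along
the enumeration `f` of contexts:
`∑ n, log₂ σ(φ + ∑_{m<n} π(f m), f n)(π (f n))`. -/
noncomputable def cohAlong (L : LearningSystem M S) (φ : M) (π : L.DPolicy)
    {k : ℕ} (f : Fin k → S) : ℝ :=
  ∑ n : Fin k, Real.logb 2
    (L.inf (φ + ∑ m ∈ Finset.univ.filter (fun m => m < n), ((π (f m) : M)))
      (f n) ((π (f n) : M)))

/-- The product `∏ n, σ(φ + ∑_{m<n} π(f m), f n)(π (f n))` along the enumeration `f`. -/
noncomputable def prodAlong (L : LearningSystem M S) (φ : M) (π : L.DPolicy)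
    {k : ℕ} (f : Fin k → S) : ℝ :=
  ∏ n : Fin k,
    L.inf (φ + ∑ m ∈ Finset.univ.filter (fun m => m < n), ((π (f m) : M)))
      (f n) ((π (f n) : M))

/-- Accuracy of `π` with respect to the ground truth `πs`:
`α(π;π*) = (1/|S|) ∑_{s∈S} 1[π(s) = π*(s)]`. -/
noncomputable def accuracy [DecidableEq M] (L : LearningSystem M S)
    (π πs : L.DPolicy) : ℝ :=
  (∑ s : S, if (π s : M) = ((πs s : M)) then (1 : ℝ) else 0) / (Fintype.card S : ℝ)

/-- Training accuracy of `π` on the training contexts `shat`: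
`α_train(π;π*) = (1/N) ∑_i 1[π(ŝ_i) = π*(ŝ_i)]`. -/
noncomputable def trainAccuracy [DecidableEq M] (L : LearningSystem M S) {N : ℕ}
    (shat : Fin N → S) (π πs : L.DPolicy) : ℝ :=
  (∑ i : Fin N, if (π (shat i) : M) = ((πs (shat i) : M)) then (1 : ℝ) else 0) / (N : ℝ)

end LearningSystem

/-- The regularized maximizer has coherence at least that of the ground truth: for any
prior policy `φ`, any fixed training contexts `ŝ₁,…,ŝ_N`, and any constant `c` with
`−2χ_φ(π) + c ≥ 0` for all `π`, if `π̂` maximizes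
`α_train(π;π*) − √((−2χ_φ(π) + c)/(2N))` over all d-policies, then
`χ_φ(π̂) ≥ χ_φ(π*)`. -/
theorem regularized_maximizer_coherence_ge {M S : Type} [AddCommMonoid M] [DecidableEq M]
    [Fintype S] [DecidableEq S] [Nonempty S] (L : LearningSystem M S)
    (hfs : L.FullSupport) (φ : M) {k : ℕ} (e : Fin k ≃ S) (πs : L.DPolicy)
    (N : ℕ) (hN : 1 ≤ N) (shat : Fin N → S) (c : ℝ)
    (hc : ∀ π : L.DPolicy, 0 ≤ -2 * L.cohAlong φ π ⇑e + c)
    (pihat : L.DPolicy)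
    (hmax : ∀ π : L.DPolicy,
      L.trainAccuracy shat π πs -
          Real.sqrt ((-2 * L.cohAlong φ π ⇑e + c) / (2 * (N : ℝ))) ≤
        L.trainAccuracy shat pihat πs -
          Real.sqrt ((-2 * L.cohAlong φ pihat ⇑e + c) / (2 * (N : ℝ)))) :
    L.cohAlong φ πs ⇑e ≤ L.cohAlong φ pihat ⇑e := by
  have hNpos : (0:ℝ) < N := by exact_mod_cast hN
  have hacc1 : L.trainAccuracy shat πs πs = 1 := by
    unfold LearningSystem.trainAccuracy
    simp [Finset.sum_const]
    omega
  have hacc2 : L.trainAccuracy shat pihat πs ≤ 1 := by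
    unfold LearningSystem.trainAccuracy
    rw [div_le_one hNpos]
    calc (∑ i : Fin N, if (pihat (shat i) : M) = ((πs (shat i) : M)) then (1 : ℝ) else 0)
        ≤ ∑ i : Fin N, (1:ℝ) := by
          apply Finset.sum_le_sum; intro i _; split <;> norm_num
      _ = N := by simp
  have h := hmax πs
  rw [hacc1] at h
  have hsq : Real.sqrt ((-2 * L.cohAlong φ pihat ⇑e + c) / (2 * (N : ℝ)))
      ≤ Real.sqrt ((-2 * L.cohAlong φ πs ⇑e + c) / (2 * (N : ℝ))) := by
    linarith
  have hnn : 0 ≤ (-2 * L.cohAlong φ pihat ⇑e + c) / (2 * (N : ℝ)) :=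
    div_nonneg (hc pihat) (by positivity)
  have hle : (-2 * L.cohAlong φ pihat ⇑e + c) / (2 * (N : ℝ))
      ≤ (-2 * L.cohAlong φ πs ⇑e + c) / (2 * (N : ℝ)) := by

    nlinarith [Real.sq_sqrt hnn, Real.sq_sqrt (div_nonneg (hc πs) (by positivity : (0:ℝ) ≤ 2*(N:ℝ))), Real.sqrt_nonneg ((-2 * L.cohAlong φ pihat ⇑e + c) / (2 * (N : ℝ)))]
  have := (div_le_div_iff_of_pos_right (c := 2*(N:ℝ)) (by positivity)).mp hle
  linarith
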